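/- arXiv:2112.02685 — 2 statements merged into one kernel-verified Lean document; each statement's English description precedes it below -/
import Mathlib

section
/- For all α ∈ (0,1] and all n ∈ ℕ with h = 1/n, there exists a real symmetric matrix R_n with ‖R_n‖₂ ≤ α/(3π n²(3-α)) such that h^{α} T_n(|θ|^{2-α}) ≤ T_n(|θ|²) + R_n in the Loewner order. -/
open MeasureTheory Matrix
open scoped ComplexOrder

noncomputable def tFourierCoeff (f : ℝ → ℂ) (k : ℤ) : ℂ :=
  (1 / (2 * Real.pi)) * ∫ θ in (-Real.pi)..Real.pi, f θ * Complex.exp (-Complex.I * k * θ)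

noncomputable def toeplitz (n : ℕ) (f : ℝ → ℂ) : Matrix (Fin n) (Fin n) ℂ :=
  Matrix.of fun s t => tFourierCoeff f ((s : ℤ) - (t : ℤ))

open scoped Matrix.Norms.L2Operator

lemma interval_integral_conj (f : ℝ → ℂ) (a b : ℝ) :
    (∫ x in a..b, (starRingEnd ℂ) (f x)) = (starRingEnd ℂ) (∫ x in a..b, f x) := by
  rw [intervalIntegral, intervalIntegral, integral_conj, integral_conj, map_sub]

lemma tFC_conj (f : ℝ → ℝ) (k : ℤ) :
    (starRingEnd ℂ) (tFourierCoeff (fun θ => (f θ : ℂ)) k)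
      = tFourierCoeff (fun θ => (f θ : ℂ)) (-k) := by
  have hc : ((1 : ℂ)/(2*Real.pi)) = (((1:ℝ)/(2*Real.pi) : ℝ) : ℂ) := by push_cast; ring
  have hint : (∫ θ in (-Real.pi)..Real.pi,
        (starRingEnd ℂ) ((f θ : ℂ) * Complex.exp (-Complex.I * k * θ)))
      = ∫ θ in (-Real.pi)..Real.pi, (f θ : ℂ) * Complex.exp (-Complex.I * (-k : ℤ) * θ) := by
    apply intervalIntegral.integral_congr
    intro θ _
    simp only []
    rw [_root_.map_mul, Complex.conj_ofReal, ← Complex.exp_conj]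
    congr 1
    simp only [_root_.map_mul, map_neg, Complex.conj_I, Complex.conj_ofReal, map_intCast]
    push_cast
    ring
  unfold tFourierCoeff
  rw [_root_.map_mul, ← interval_integral_conj, hint, hc, Complex.conj_ofReal]

lemma tFC_even (f : ℝ → ℝ) (hf : ∀ θ, f (-θ) = f θ) (k : ℤ) :
    tFourierCoeff (fun θ => (f θ : ℂ)) (-k) = tFourierCoeff (fun θ => (f θ : ℂ)) k := by
  unfold tFourierCoeff
  congr 1
  have := intervalIntegral.integral_comp_neg
    (f := fun θ => (f θ : ℂ) * Complex.exp (-Complex.I * k * θ)) (a := -Real.pi) (b := Real.pi)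
  rw [neg_neg] at this
  rw [← this]
  congr 1
  ext θ
  rw [hf]
  push_cast
  ring_nf


set_option maxHeartbeats 1000000 in
lemma l2_opNorm_le_of_entrywise (n : ℕ) (A : Matrix (Fin n) (Fin n) ℂ) {c : ℝ} (hc : 0 ≤ c)
    (hA : ∀ s t, ‖A s t‖ ≤ c) : ‖A‖ ≤ n * c := by
  rw [Matrix.l2_opNorm_def]
  refine ContinuousLinearMap.opNorm_le_bound _ (by positivity) fun x => ?_
  have h2 : ‖x‖ ^ 2 = ∑ t, ‖x t‖ ^ 2 := by
    rw [EuclideanSpace.norm_eq, Real.sq_sqrt (by positivity)]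
  have key : ∑ t, ‖x t‖ ≤ Real.sqrt n * ‖x‖ := by
    have h1 : (∑ t, ‖x t‖) ^ 2 ≤ (n : ℝ) * ∑ t, ‖x t‖ ^ 2 := by
      simpa using sq_sum_le_card_mul_sum_sq (s := Finset.univ) (f := fun t : Fin n => ‖x t‖)
    have h3 := Real.sqrt_le_sqrt h1
    rw [Real.sqrt_sq (by positivity), Real.sqrt_mul (by positivity), ← h2,
      Real.sqrt_sq (norm_nonneg x)] at h3
    exact h3
  have coord : ∀ s : Fin n, ‖(A *ᵥ (fun t => x t)) s‖ ≤ c * (Real.sqrt n * ‖x‖) := by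
    intro s
    calc ‖∑ t, A s t * x t‖ ≤ ∑ t, ‖A s t * x t‖ := norm_sum_le _ _
      _ ≤ ∑ t, c * ‖x t‖ := by
          refine Finset.sum_le_sum fun t _ => ?_
          rw [norm_mul]
          exact mul_le_mul_of_nonneg_right (hA s t) (norm_nonneg _)
      _ = c * ∑ t, ‖x t‖ := by rw [Finset.mul_sum]
      _ ≤ c * (Real.sqrt n * ‖x‖) := mul_le_mul_of_nonneg_left key hc
  have happ : ((Matrix.toEuclideanLin ≪≫ₗ LinearMap.toContinuousLinearMap) A) x
      = (WithLp.equiv 2 (Fin n → ℂ)).symm (A *ᵥ (fun t => x t)) := rfl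
  have heq : ‖((Matrix.toEuclideanLin ≪≫ₗ LinearMap.toContinuousLinearMap) A) x‖
      = Real.sqrt (∑ s, ‖(A *ᵥ (fun t => x t)) s‖ ^ 2) := by
    rw [happ, EuclideanSpace.norm_eq]
    simp
  rw [heq]
  calc Real.sqrt (∑ s, ‖(A *ᵥ (fun t => x t)) s‖ ^ 2)
      ≤ Real.sqrt (∑ _s : Fin n, (c * (Real.sqrt n * ‖x‖)) ^ 2) := by
        apply Real.sqrt_le_sqrt
        exact Finset.sum_le_sum fun s _ => pow_le_pow_left₀ (norm_nonneg _) (coord s) 2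
    _ = n * c * ‖x‖ := by
        rw [Finset.sum_const, Finset.card_univ, Fintype.card_fin, nsmul_eq_mul,
          Real.sqrt_mul (by positivity), Real.sqrt_sq (by positivity)]
        rw [show Real.sqrt n * (c * (Real.sqrt n * ‖x‖)) = (Real.sqrt n * Real.sqrt n) * c * ‖x‖ by ring,
          Real.mul_self_sqrt (by positivity)]

lemma intervalIntegrable_ofReal {f : ℝ → ℝ} {a b : ℝ}
    (hf : IntervalIntegrable f volume a b) :
    IntervalIntegrable (fun x => (f x : ℂ)) volume a b := by
  rw [intervalIntegrable_iff] at hf ⊢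
  exact hf.ofReal

lemma continuous_E (k : ℤ) : Continuous fun θ : ℝ => Complex.exp (-Complex.I * k * θ) :=
  Complex.continuous_exp.comp (by fun_prop)

set_option maxHeartbeats 1000000 in
lemma toeplitz_qf (n : ℕ) (g : ℝ → ℝ)
    (hgi : IntervalIntegrable g volume (-Real.pi) Real.pi) (x : Fin n → ℂ) :
    star x ⬝ᵥ (toeplitz n (fun θ => (g θ : ℂ))) *ᵥ x
      = (((1/(2*Real.pi)) * ∫ θ in (-Real.pi)..Real.pi,
          g θ * Complex.normSq (∑ t : Fin n, x t * Complex.exp (Complex.I * (t:ℤ) * θ)) : ℝ) : ℂ) := by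
  classical
  set S : ℝ → ℂ := fun θ => ∑ t : Fin n, x t * Complex.exp (Complex.I * (t:ℤ) * θ) with hS
  have hgC : IntervalIntegrable (fun θ => (g θ : ℂ)) volume (-Real.pi) Real.pi :=
    intervalIntegrable_ofReal hgi
  have hgE : ∀ k : ℤ, IntervalIntegrable
      (fun θ => (g θ : ℂ) * Complex.exp (-Complex.I * k * θ)) volume (-Real.pi) Real.pi :=
    fun k => hgC.mul_continuousOn (continuous_E k).continuousOn
  have step1 : star x ⬝ᵥ (toeplitz n (fun θ => (g θ : ℂ))) *ᵥ x
      = ∑ p : Fin n × Fin n, ((starRingEnd ℂ) (x p.1) * x p.2) *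
          tFourierCoeff (fun θ => (g θ : ℂ)) ((p.1 : ℤ) - (p.2 : ℤ)) := by
    simp only [dotProduct, Matrix.mulVec, Pi.star_apply, RCLike.star_def,
      Finset.mul_sum, Fintype.sum_prod_type, toeplitz, Matrix.of_apply]
    refine Finset.sum_congr rfl fun s _ => Finset.sum_congr rfl fun t _ => ?_
    set c := tFourierCoeff (fun θ => (g θ : ℂ)) ((s : ℤ) - (t : ℤ)) with hc
    ring
  have step2 : ∀ p : Fin n × Fin n, ((starRingEnd ℂ) (x p.1) * x p.2) *
          tFourierCoeff (fun θ => (g θ : ℂ)) ((p.1 : ℤ) - (p.2 : ℤ))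
      = (1/(2*Real.pi)) * ∫ θ in (-Real.pi)..Real.pi,
            ((starRingEnd ℂ) (x p.1) * x p.2) *
              ((g θ : ℂ) * Complex.exp (-Complex.I * (((p.1 : ℤ) - (p.2 : ℤ) : ℤ) : ℂ) * θ)) := by
    intro p
    simp only [tFourierCoeff]
    rw [intervalIntegral.integral_const_mul]
    set I := ∫ θ in (-Real.pi)..Real.pi,
      (g θ : ℂ) * Complex.exp (-Complex.I * (((p.1 : ℤ) - (p.2 : ℤ) : ℤ) : ℂ) * θ) with hI
    ring
  rw [step1]
  rw [Finset.sum_congr rfl fun p _ => step2 p]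
  rw [← Finset.mul_sum]
  have hswap : (∑ p : Fin n × Fin n, ∫ θ in (-Real.pi)..Real.pi,
        ((starRingEnd ℂ) (x p.1) * x p.2) *
          ((g θ : ℂ) * Complex.exp (-Complex.I * (((p.1 : ℤ) - (p.2 : ℤ) : ℤ) : ℂ) * θ)))
      = ∫ θ in (-Real.pi)..Real.pi, ∑ p : Fin n × Fin n,
          ((starRingEnd ℂ) (x p.1) * x p.2) *
            ((g θ : ℂ) * Complex.exp (-Complex.I * (((p.1 : ℤ) - (p.2 : ℤ) : ℤ) : ℂ) * θ)) :=
    (intervalIntegral.integral_finset_sum (μ := volume) (a := -Real.pi) (b := Real.pi)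
      (f := fun (p : Fin n × Fin n) (θ : ℝ) => ((starRingEnd ℂ) (x p.1) * x p.2) *
        ((g θ : ℂ) * Complex.exp (-Complex.I * (((p.1 : ℤ) - (p.2 : ℤ) : ℤ) : ℂ) * θ)))
      (fun p _ =>
      ((hgE ((p.1 : ℤ) - (p.2 : ℤ))).const_mul ((starRingEnd ℂ) (x p.1) * x p.2)))).symm
  rw [hswap]
  have hpt : ∀ θ : ℝ, (∑ p : Fin n × Fin n, ((starRingEnd ℂ) (x p.1) * x p.2) *
        ((g θ : ℂ) * Complex.exp (-Complex.I * (((p.1 : ℤ) - (p.2 : ℤ) : ℤ) : ℂ) * θ)))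
      = ((g θ * Complex.normSq (S θ) : ℝ) : ℂ) := by
    intro θ
    have hsplit : ∀ s t : Fin n, Complex.exp (-Complex.I * (((s:ℤ) - (t:ℤ) : ℤ) : ℂ) * θ)
        = Complex.exp (-(Complex.I * (s:ℤ) * θ)) * Complex.exp (Complex.I * (t:ℤ) * θ) := by
      intro s t
      rw [← Complex.exp_add]
      congr 1
      push_cast
      ring
    have hconjS : (starRingEnd ℂ) (S θ) = ∑ s : Fin n, (starRingEnd ℂ) (x s) *
        Complex.exp (-(Complex.I * (s:ℤ) * θ)) := by
      rw [hS]
      rw [map_sum]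
      refine Finset.sum_congr rfl fun s _ => ?_
      rw [_root_.map_mul, ← Complex.exp_conj]
      congr 1
      simp only [_root_.map_mul, map_neg, Complex.conj_I, Complex.conj_ofReal, map_intCast]
      ring
    have hns : ((Complex.normSq (S θ) : ℝ) : ℂ) = (starRingEnd ℂ) (S θ) * S θ := by
      rw [Complex.normSq_eq_conj_mul_self]
    rw [Complex.ofReal_mul, hns, hconjS, hS]
    rw [Finset.sum_mul_sum]
    rw [Finset.mul_sum]
    simp only [Fintype.sum_prod_type]
    refine Finset.sum_congr rfl fun s _ => ?_
    rw [Finset.mul_sum]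
    refine Finset.sum_congr rfl fun t _ => ?_
    rw [hsplit s t]
    ring
  rw [intervalIntegral.integral_congr (fun θ _ => hpt θ)]
  rw [intervalIntegral.integral_ofReal]
  simp only [hS]
  push_cast
  ring

lemma toeplitz_posSemidef (n : ℕ) (g : ℝ → ℝ) (hg0 : ∀ θ, 0 ≤ g θ)
    (hgi : IntervalIntegrable g volume (-Real.pi) Real.pi) :
    (toeplitz n (fun θ => (g θ : ℂ))).PosSemidef := by
  rw [Matrix.posSemidef_iff_dotProduct_mulVec]
  constructor
  · ext s t
    simp only [Matrix.conjTranspose_apply, toeplitz, Matrix.of_apply, RCLike.star_def]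
    rw [tFC_conj]
    congr 1
    ring
  · intro x
    rw [toeplitz_qf n g hgi x, Complex.zero_le_real]
    apply mul_nonneg
    · positivity
    · apply intervalIntegral.integral_nonneg (by linarith [Real.pi_pos])
      intro θ _
      exact mul_nonneg (hg0 θ) (Complex.normSq_nonneg _)

lemma toeplitz_transpose (n : ℕ) (f : ℝ → ℝ) (hf : ∀ θ, f (-θ) = f θ) :
    (toeplitz n (fun θ => (f θ : ℂ)))ᵀ = toeplitz n (fun θ => (f θ : ℂ)) := by
  ext s t
  simp only [Matrix.transpose_apply, toeplitz, Matrix.of_apply]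
  rw [show ((t : ℤ) - (s : ℤ)) = -((s : ℤ) - (t : ℤ)) by ring, tFC_even f hf]

lemma toeplitz_im_eq_zero (n : ℕ) (f : ℝ → ℝ) (hf : ∀ θ, f (-θ) = f θ) (s t : Fin n) :
    ((toeplitz n (fun θ => (f θ : ℂ))) s t).im = 0 := by
  rw [← Complex.conj_eq_iff_im]
  simp only [toeplitz, Matrix.of_apply]
  rw [tFC_conj, tFC_even f hf]

noncomputable def psiF (α h : ℝ) : ℝ → ℝ :=
  Set.indicator (Set.Icc (-h) h) (fun θ => |θ| ^ ((2:ℝ) - α) * h ^ α - |θ| ^ (2:ℝ))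

lemma psiF_even (α h : ℝ) (θ : ℝ) : psiF α h (-θ) = psiF α h θ := by
  unfold psiF
  have hmem : (-θ) ∈ Set.Icc (-h) h ↔ θ ∈ Set.Icc (-h) h := by
    simp only [Set.mem_Icc]
    constructor <;> intro hθ <;> constructor <;> linarith [hθ.1, hθ.2]
  by_cases hc : θ ∈ Set.Icc (-h) h
  · rw [Set.indicator_of_mem (hmem.mpr hc), Set.indicator_of_mem hc, abs_neg]
  · rw [Set.indicator_of_notMem (fun hx => hc (hmem.mp hx)), Set.indicator_of_notMem hc]

lemma psiF_nonneg {α h : ℝ} (hα : α ∈ Set.Ioc (0:ℝ) 1) (θ : ℝ) :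
    0 ≤ psiF α h θ := by
  unfold psiF
  apply Set.indicator_nonneg
  intro x hx
  rw [sub_nonneg]
  rcases eq_or_ne x 0 with rfl | hx0
  · rw [abs_zero, Real.zero_rpow (by norm_num), Real.zero_rpow (by linarith [hα.2]), zero_mul]
  · have hax : 0 < |x| := abs_pos.mpr hx0
    have hxh : |x| ≤ h := abs_le.mpr ⟨hx.1, hx.2⟩
    calc |x| ^ (2:ℝ) = |x| ^ ((2:ℝ) - α) * |x| ^ α := by
          rw [← Real.rpow_add hax]; ring_nf
      _ ≤ |x| ^ ((2:ℝ) - α) * h ^ α := by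
          apply mul_le_mul_of_nonneg_left
          · exact Real.rpow_le_rpow (abs_nonneg x) hxh (le_of_lt hα.1)
          · positivity

lemma cont_rpow_abs {p : ℝ} (hp : 0 ≤ p) : Continuous fun θ : ℝ => |θ| ^ p :=
  continuous_abs.rpow_const (fun _ => Or.inr hp)

lemma psiF_intervalIntegrable {α h : ℝ} (hα : α ∈ Set.Ioc (0:ℝ) 1) (a b : ℝ) :
    IntervalIntegrable (psiF α h) volume a b := by
  apply MeasureTheory.Integrable.intervalIntegrable
  apply MeasureTheory.IntegrableOn.integrable_indicator _ measurableSet_Icc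
  apply Continuous.integrableOn_Icc
  exact ((cont_rpow_abs (by linarith [hα.2])).mul continuous_const).sub (cont_rpow_abs (by norm_num))

lemma psiF_integral {α h : ℝ} (hα : α ∈ Set.Ioc (0:ℝ) 1) (hh0 : 0 < h) (hh1 : h ≤ 1) :
    ∫ θ in (-Real.pi)..Real.pi, psiF α h θ = 2 * h ^ 3 * α / (3 * (3 - α)) := by
  have hα1 := hα.1
  have hα2 := hα.2
  have hπ : h < Real.pi := lt_of_le_of_lt hh1 (by linarith [Real.pi_gt_three])
  have hcont1 : Continuous fun θ : ℝ => |θ| ^ ((2:ℝ) - α) * h ^ α :=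
    (cont_rpow_abs (by linarith)).mul continuous_const
  have hcont2 : Continuous fun θ : ℝ => |θ| ^ (2:ℝ) := cont_rpow_abs (by norm_num)
  have hcontφ : Continuous fun θ : ℝ => |θ| ^ ((2:ℝ) - α) * h ^ α - |θ| ^ (2:ℝ) :=
    hcont1.sub hcont2
  have stepA : ∫ θ in (-Real.pi)..Real.pi, psiF α h θ
      = ∫ θ in (-h)..h, (|θ| ^ ((2:ℝ) - α) * h ^ α - |θ| ^ (2:ℝ)) := by
    rw [intervalIntegral.integral_of_le (by linarith), intervalIntegral.integral_of_le (by linarith)]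
    unfold psiF
    rw [setIntegral_indicator measurableSet_Icc]
    rw [Set.inter_eq_self_of_subset_right
      (by intro x hx; exact ⟨by linarith [hx.1], by linarith [hx.2]⟩),
      ← integral_Icc_eq_integral_Ioc]
  have evenφ : ∀ θ : ℝ, |(-θ)| ^ ((2:ℝ) - α) * h ^ α - |(-θ)| ^ (2:ℝ)
      = |θ| ^ ((2:ℝ) - α) * h ^ α - |θ| ^ (2:ℝ) := by intro θ; rw [abs_neg]
  have stepB : ∫ θ in (-h)..(0:ℝ), (|θ| ^ ((2:ℝ) - α) * h ^ α - |θ| ^ (2:ℝ))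
      = ∫ θ in (0:ℝ)..h, (|θ| ^ ((2:ℝ) - α) * h ^ α - |θ| ^ (2:ℝ)) := by
    have := intervalIntegral.integral_comp_neg
      (f := fun θ : ℝ => |θ| ^ ((2:ℝ) - α) * h ^ α - |θ| ^ (2:ℝ)) (a := (0:ℝ)) (b := h)
    rw [neg_zero] at this
    rw [← this]
    apply intervalIntegral.integral_congr
    intro θ _
    exact evenφ θ
  have stepC : ∫ θ in (0:ℝ)..h, (|θ| ^ ((2:ℝ) - α) * h ^ α - |θ| ^ (2:ℝ))
      = ∫ θ in (0:ℝ)..h, (θ ^ ((2:ℝ) - α) * h ^ α - θ ^ (2:ℝ)) := by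
    apply intervalIntegral.integral_congr
    intro θ hθ
    rw [Set.uIcc_of_le (by linarith), Set.mem_Icc] at hθ
    dsimp only
    rw [abs_of_nonneg hθ.1]
  have hint1 : ∫ θ in (0:ℝ)..h, θ ^ ((2:ℝ) - α) = h ^ ((2:ℝ) - α + 1) / ((2:ℝ) - α + 1) := by
    rw [integral_rpow (Or.inl (by linarith))]
    rw [Real.zero_rpow (by linarith)]
    ring
  have hint2 : ∫ θ in (0:ℝ)..h, θ ^ ((2:ℝ)) = h ^ ((2:ℝ) + 1) / ((2:ℝ) + 1) := by
    rw [integral_rpow (Or.inl (by norm_num))]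
    rw [Real.zero_rpow (by norm_num)]
    ring
  have stepD : ∫ θ in (0:ℝ)..h, (θ ^ ((2:ℝ) - α) * h ^ α - θ ^ (2:ℝ))
      = h ^ ((2:ℝ) - α + 1) / ((2:ℝ) - α + 1) * h ^ α - h ^ ((2:ℝ) + 1) / ((2:ℝ) + 1) := by
    rw [intervalIntegral.integral_sub
      ((intervalIntegral.intervalIntegrable_rpow (Or.inl (by linarith))).mul_const _)
      (intervalIntegral.intervalIntegrable_rpow (Or.inl (by norm_num)))]
    rw [intervalIntegral.integral_mul_const, hint1, hint2]
  have hsum : ∫ θ in (-h)..h, (|θ| ^ ((2:ℝ) - α) * h ^ α - |θ| ^ (2:ℝ))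
      = (∫ θ in (-h)..(0:ℝ), (|θ| ^ ((2:ℝ) - α) * h ^ α - |θ| ^ (2:ℝ)))
        + ∫ θ in (0:ℝ)..h, (|θ| ^ ((2:ℝ) - α) * h ^ α - |θ| ^ (2:ℝ)) :=
    (intervalIntegral.integral_add_adjacent_intervals
      (hcontφ.intervalIntegrable _ _) (hcontφ.intervalIntegrable _ _)).symm
  rw [stepA, hsum, stepB, stepC, stepD]
  have e1 : h ^ ((2:ℝ) - α + 1) * h ^ α = h ^ (3:ℕ) := by
    have he : (2:ℝ) - α + 1 + α = ((3:ℕ):ℝ) := by push_cast; ring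
    rw [← Real.rpow_add hh0, he, Real.rpow_natCast]
  have e2 : h ^ ((2:ℝ) + 1) = h ^ (3:ℕ) := by
    have he : (2:ℝ) + 1 = ((3:ℕ):ℝ) := by push_cast; ring
    rw [he, Real.rpow_natCast]
  have h3α : (2:ℝ) - α + 1 ≠ 0 := by linarith
  rw [div_mul_eq_mul_div, e1, e2]
  have h3α' : (3:ℝ) - α ≠ 0 := by linarith
  field_simp
  ring

noncomputable def gF (α h : ℝ) : ℝ → ℝ :=
  fun θ => |θ| ^ (2:ℝ) - h ^ α * |θ| ^ ((2:ℝ) - α) + psiF α h θ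

lemma gF_nonneg {α h : ℝ} (hα : α ∈ Set.Ioc (0:ℝ) 1) (hh0 : 0 < h) (θ : ℝ) :
    0 ≤ gF α h θ := by
  unfold gF psiF
  by_cases hc : θ ∈ Set.Icc (-h) h
  · rw [Set.indicator_of_mem hc]
    have : |θ| ^ (2:ℝ) - h ^ α * |θ| ^ ((2:ℝ) - α)
        + (|θ| ^ ((2:ℝ) - α) * h ^ α - |θ| ^ (2:ℝ)) = 0 := by ring
    rw [this]
  · rw [Set.indicator_of_notMem hc, add_zero, sub_nonneg]
    have habs : h < |θ| := by
      simp only [Set.mem_Icc, not_and_or, not_le] at hc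
      rcases hc with hc | hc
      · rw [abs_of_neg (by linarith)]; linarith
      · rw [abs_of_pos (by linarith)]; linarith
    have hθ0 : 0 < |θ| := lt_trans hh0 habs
    have hsplit : |θ| ^ (2:ℝ) = |θ| ^ ((2:ℝ) - α) * |θ| ^ α := by
      rw [← Real.rpow_add hθ0]; ring_nf
    rw [hsplit, mul_comm (h ^ α)]
    apply mul_le_mul_of_nonneg_left
    · exact Real.rpow_le_rpow (le_of_lt hh0) (le_of_lt habs) (le_of_lt hα.1)
    · positivity

lemma gF_intervalIntegrable {α h : ℝ} (hα : α ∈ Set.Ioc (0:ℝ) 1) (a b : ℝ) :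
    IntervalIntegrable (gF α h) volume a b := by
  unfold gF
  exact (((cont_rpow_abs (by norm_num)).sub
    (continuous_const.mul (cont_rpow_abs (by linarith [hα.2])))).intervalIntegrable a b).add
    (psiF_intervalIntegrable hα a b)

lemma tFC_norm_le (f : ℝ → ℝ) (hf0 : ∀ θ, 0 ≤ f θ) (k : ℤ) :
    ‖tFourierCoeff (fun θ => (f θ : ℂ)) k‖
      ≤ (1/(2*Real.pi)) * ∫ θ in (-Real.pi)..Real.pi, f θ := by
  unfold tFourierCoeff
  rw [norm_mul]
  have hπ := Real.pi_pos
  have hnc : ‖((1 : ℂ) / (2 * (Real.pi : ℂ)))‖ = 1/(2*Real.pi) := by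
    have : ((1:ℂ) / (2 * (Real.pi:ℂ))) = (((1:ℝ)/(2*Real.pi) : ℝ) : ℂ) := by push_cast; ring
    rw [this, Complex.norm_real, Real.norm_eq_abs, abs_of_pos (by positivity)]
  rw [hnc]
  apply mul_le_mul_of_nonneg_left _ (by positivity)
  refine le_trans (intervalIntegral.norm_integral_le_integral_norm (by linarith)) (le_of_eq ?_)
  apply intervalIntegral.integral_congr
  intro θ _
  dsimp only
  rw [norm_mul, Complex.norm_real, Real.norm_eq_abs, abs_of_nonneg (hf0 θ),
    Complex.norm_exp]
  have : (-Complex.I * (k : ℂ) * (θ : ℂ)).re = 0 := by simp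
  rw [this, Real.exp_zero, mul_one]

lemma toeplitz_linear (n : ℕ) (c : ℝ) (f1 f2 f3 : ℝ → ℝ)
    (h1 : IntervalIntegrable f1 volume (-Real.pi) Real.pi)
    (h2 : IntervalIntegrable f2 volume (-Real.pi) Real.pi)
    (h3 : IntervalIntegrable f3 volume (-Real.pi) Real.pi) :
    toeplitz n (fun θ => ((f1 θ - c * f2 θ + f3 θ : ℝ) : ℂ))
      = toeplitz n (fun θ => (f1 θ : ℂ)) + toeplitz n (fun θ => (f3 θ : ℂ))
        - c • toeplitz n (fun θ => (f2 θ : ℂ)) := by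
  ext s t
  simp only [Matrix.add_apply, Matrix.sub_apply, Matrix.smul_apply, toeplitz, Matrix.of_apply]
  rw [Complex.real_smul]
  set k : ℤ := (s : ℤ) - (t : ℤ) with hk
  have hE := continuous_E k
  have H1 : IntervalIntegrable (fun θ => (f1 θ : ℂ) * Complex.exp (-Complex.I * k * θ))
      volume (-Real.pi) Real.pi := (intervalIntegrable_ofReal h1).mul_continuousOn hE.continuousOn
  have H2 : IntervalIntegrable (fun θ => (f2 θ : ℂ) * Complex.exp (-Complex.I * k * θ))
      volume (-Real.pi) Real.pi := (intervalIntegrable_ofReal h2).mul_continuousOn hE.continuousOn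
  have H3 : IntervalIntegrable (fun θ => (f3 θ : ℂ) * Complex.exp (-Complex.I * k * θ))
      volume (-Real.pi) Real.pi := (intervalIntegrable_ofReal h3).mul_continuousOn hE.continuousOn
  have key : (∫ θ in (-Real.pi)..Real.pi,
        ((f1 θ - c * f2 θ + f3 θ : ℝ) : ℂ) * Complex.exp (-Complex.I * k * θ))
      = ((∫ θ in (-Real.pi)..Real.pi, (f1 θ : ℂ) * Complex.exp (-Complex.I * k * θ))
          + ∫ θ in (-Real.pi)..Real.pi, (f3 θ : ℂ) * Complex.exp (-Complex.I * k * θ))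
        - (c : ℂ) * ∫ θ in (-Real.pi)..Real.pi, (f2 θ : ℂ) * Complex.exp (-Complex.I * k * θ) := by
    have hpt : ∀ θ ∈ Set.uIcc (-Real.pi) Real.pi,
        ((f1 θ - c * f2 θ + f3 θ : ℝ) : ℂ) * Complex.exp (-Complex.I * k * θ)
        = ((f1 θ : ℂ) * Complex.exp (-Complex.I * k * θ)
            + (f3 θ : ℂ) * Complex.exp (-Complex.I * k * θ))
          - (c : ℂ) * ((f2 θ : ℂ) * Complex.exp (-Complex.I * k * θ)) := by
      intro θ _
      push_cast
      ring
    rw [intervalIntegral.integral_congr hpt,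
      intervalIntegral.integral_sub (H1.add H3) (H2.const_mul _),
      intervalIntegral.integral_add H1 H3, intervalIntegral.integral_const_mul]
  unfold tFourierCoeff
  rw [key]
  ring

theorem toeplitz_rpow_comparison
    (α : ℝ) (hα : α ∈ Set.Ioc (0 : ℝ) 1)
    (n : ℕ) (hn : 0 < n) (h : ℝ) (hh : h = 1 / n) :
    ∃ R : Matrix (Fin n) (Fin n) ℂ,
      Rᵀ = R ∧ (∀ s t, (R s t).im = 0) ∧
      ‖R‖ ≤ α / (3 * Real.pi * n ^ 2 * (3 - α)) ∧
      (toeplitz n (fun θ => ((|θ| ^ (2 : ℝ) : ℝ) : ℂ)) + R -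
        (h ^ α : ℝ) • toeplitz n (fun θ => ((|θ| ^ (2 - α) : ℝ) : ℂ))).PosSemidef := by
  have hα1 := hα.1
  have hα2 := hα.2
  have hπ := Real.pi_pos
  have hn' : (1:ℝ) ≤ (n:ℝ) := by exact_mod_cast hn
  have hn0 : (0:ℝ) < (n:ℝ) := by linarith
  have hh0 : 0 < h := by rw [hh]; positivity
  have hh1 : h ≤ 1 := by rw [hh, div_le_one hn0]; exact hn'
  refine ⟨toeplitz n (fun θ => (psiF α h θ : ℂ)), ?_, ?_, ?_, ?_⟩
  · exact toeplitz_transpose n _ (psiF_even α h)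
  · exact toeplitz_im_eq_zero n _ (psiF_even α h)
  · have hc0 : (0:ℝ) ≤ (1/(2*Real.pi)) * (2*h^3*α/(3*(3-α))) := by
      have h3 : (0:ℝ) < 3 - α := by linarith
      positivity
    have hb : ∀ s t : Fin n, ‖toeplitz n (fun θ => (psiF α h θ : ℂ)) s t‖
        ≤ (1/(2*Real.pi)) * (2*h^3*α/(3*(3-α))) := by
      intro s t
      have hle := tFC_norm_le (psiF α h) (psiF_nonneg hα) ((s:ℤ)-(t:ℤ))
      rw [psiF_integral hα hh0 hh1] at hle
      exact hle
    refine le_trans (l2_opNorm_le_of_entrywise n _ hc0 hb) (le_of_eq ?_)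
    rw [hh]
    have h3 : (3:ℝ) - α ≠ 0 := by linarith
    field_simp
  · have hmat : toeplitz n (fun θ => (gF α h θ : ℂ))
        = toeplitz n (fun θ => ((|θ| ^ (2 : ℝ) : ℝ) : ℂ))
          + toeplitz n (fun θ => (psiF α h θ : ℂ))
          - (h ^ α : ℝ) • toeplitz n (fun θ => ((|θ| ^ (2 - α) : ℝ) : ℂ)) := by
      exact toeplitz_linear n (h ^ α) (fun θ => |θ| ^ (2:ℝ)) (fun θ => |θ| ^ ((2:ℝ) - α))
        (psiF α h)
        ((cont_rpow_abs (by norm_num)).intervalIntegrable _ _)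
        ((cont_rpow_abs (by linarith)).intervalIntegrable _ _)
        (psiF_intervalIntegrable hα _ _)
    rw [← hmat]
    exact toeplitz_posSemidef n (gF α h) (gF_nonneg hα hh0) (gF_intervalIntegrable hα _ _)
end

section
/- Let q ≥ 1, α_0,…,α_{q-1} ∈ (0,1], n ∈ ℕ, h = 1/n, and M_{n,q} := (1/q) Σ_{j=0}^{q-1} h^{α_j} T_n(|θ|^{2-α_j}). Then λ_min(M_{n,q}) ≤ λ_min(T_n(|θ|²)) + (h²/(3π q)) Σ_{j=0}^{q-1} α_j/(3-α_j). -/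
open MeasureTheory Matrix
open scoped ComplexOrder

noncomputable def trigPoly (n : ℕ) (x : Fin n → ℂ) (θ : ℝ) : ℂ :=
  ∑ t : Fin n, x t * Complex.exp (Complex.I * t * θ)

lemma trigPoly_continuous (n : ℕ) (x : Fin n → ℂ) : Continuous (trigPoly n x) := by
  unfold trigPoly
  refine continuous_finset_sum _ fun t _ => ?_
  fun_prop

lemma sum_mulVec' {ι : Type*} (s : Finset ι) {m : ℕ} (A : ι → Matrix (Fin m) (Fin m) ℂ)
    (v : Fin m → ℂ) : (∑ j ∈ s, A j) *ᵥ v = ∑ j ∈ s, A j *ᵥ v := by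
  classical
  induction s using Finset.induction with
  | empty => simp [Matrix.zero_mulVec]
  | insert _ _ hj ih => rw [Finset.sum_insert hj, Finset.sum_insert hj, Matrix.add_mulVec, ih]

lemma dotProduct_sum' {ι : Type*} (s : Finset ι) {m : ℕ} (u : Fin m → ℂ)
    (v : ι → Fin m → ℂ) : u ⬝ᵥ (∑ j ∈ s, v j) = ∑ j ∈ s, u ⬝ᵥ v j := by
  classical
  induction s using Finset.induction with
  | empty => simp
  | insert _ _ hj ih => rw [Finset.sum_insert hj, Finset.sum_insert hj, dotProduct_add, ih]

/-- Quadratic form of a Toeplitz matrix with real symbol. -/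
lemma toeplitz_quadForm (n : ℕ) (g : ℝ → ℝ) (hg : Continuous g) (x : Fin n → ℂ) :
    star x ⬝ᵥ (toeplitz n fun θ => ((g θ : ℝ) : ℂ)) *ᵥ x =
      (((1 / (2 * Real.pi)) *
        ∫ θ in (-Real.pi)..Real.pi, g θ * Complex.normSq (trigPoly n x θ) : ℝ) : ℂ) := by
  classical
  set F : Fin n → Fin n → ℝ → ℂ := fun s t θ =>
    (starRingEnd ℂ) (x s) * x t *
      (((g θ : ℝ) : ℂ) * (Complex.exp (-Complex.I * s * θ) * Complex.exp (Complex.I * t * θ)))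
    with hF
  have hFc : ∀ s t : Fin n, Continuous (F s t) := by
    intro s t
    apply Continuous.mul continuous_const
    apply Continuous.mul (Complex.continuous_ofReal.comp hg)
    fun_prop
  have hFi : ∀ s t : Fin n, IntervalIntegrable (F s t) volume (-Real.pi) Real.pi :=
    fun s t => (hFc s t).intervalIntegrable _ _
  have step1 : star x ⬝ᵥ (toeplitz n fun θ => ((g θ : ℝ) : ℂ)) *ᵥ x =
      ∑ s : Fin n, ∑ t : Fin n, (1 / (2 * (Real.pi : ℂ))) *
        ∫ θ in (-Real.pi)..Real.pi, F s t θ := by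
    simp only [dotProduct, mulVec, Pi.star_apply, RCLike.star_def, Finset.mul_sum]
    refine Finset.sum_congr rfl fun s _ => Finset.sum_congr rfl fun t _ => ?_
    show (starRingEnd ℂ) (x s) * ((toeplitz n fun θ => ((g θ : ℝ) : ℂ)) s t * x t) = _
    have hexp : ∀ θ : ℝ, Complex.exp (-Complex.I * (((s : ℤ) - (t : ℤ) : ℤ) : ℂ) * θ) =
        Complex.exp (-Complex.I * s * θ) * Complex.exp (Complex.I * t * θ) := by
      intro θ
      rw [← Complex.exp_add]
      congr 1
      push_cast
      ring
    simp only [toeplitz, Matrix.of_apply, tFourierCoeff]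
    simp only [hexp]
    have hfun : (fun θ : ℝ => ((starRingEnd ℂ) (x s) * x t) *
        (((g θ : ℝ) : ℂ) * (Complex.exp (-Complex.I * s * θ) * Complex.exp (Complex.I * t * θ)))) =
        F s t := by
      funext θ
      simp only [hF]
      try ring
    calc (starRingEnd ℂ) (x s) * ((1 / (2 * (Real.pi:ℂ)) *
          ∫ θ in (-Real.pi)..Real.pi, ((g θ : ℝ) : ℂ) *
            (Complex.exp (-Complex.I * s * θ) * Complex.exp (Complex.I * t * θ))) * x t)
        = (1 / (2 * (Real.pi:ℂ))) * (((starRingEnd ℂ) (x s) * x t) *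
          ∫ θ in (-Real.pi)..Real.pi, ((g θ : ℝ) : ℂ) *
            (Complex.exp (-Complex.I * s * θ) * Complex.exp (Complex.I * t * θ))) := by ring
      _ = (1 / (2 * (Real.pi:ℂ))) * ∫ θ in (-Real.pi)..Real.pi, ((starRingEnd ℂ) (x s) * x t) *
            (((g θ : ℝ) : ℂ) *
              (Complex.exp (-Complex.I * s * θ) * Complex.exp (Complex.I * t * θ))) := by
          rw [intervalIntegral.integral_const_mul]
      _ = (1 / (2 * (Real.pi:ℂ))) * ∫ θ in (-Real.pi)..Real.pi, F s t θ := by rw [hfun]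
  rw [step1]
  have step2 : ∑ s : Fin n, ∑ t : Fin n, (1 / (2 * (Real.pi : ℂ))) *
        ∫ θ in (-Real.pi)..Real.pi, F s t θ =
      (1 / (2 * (Real.pi : ℂ))) *
        ∫ θ in (-Real.pi)..Real.pi, ∑ s : Fin n, ∑ t : Fin n, F s t θ := by
    calc ∑ s : Fin n, ∑ t : Fin n, (1 / (2 * (Real.pi : ℂ))) *
          ∫ θ in (-Real.pi)..Real.pi, F s t θ
        = (1 / (2 * (Real.pi : ℂ))) * ∑ s : Fin n, ∑ t : Fin n,
            ∫ θ in (-Real.pi)..Real.pi, F s t θ := by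
          rw [Finset.mul_sum]
          exact Finset.sum_congr rfl fun s _ => by rw [Finset.mul_sum]
      _ = (1 / (2 * (Real.pi : ℂ))) * ∑ s : Fin n,
            ∫ θ in (-Real.pi)..Real.pi, ∑ t : Fin n, F s t θ := by
          congr 1
          exact Finset.sum_congr rfl fun s _ =>
            (intervalIntegral.integral_finset_sum (fun t _ => hFi s t)).symm
      _ = (1 / (2 * (Real.pi : ℂ))) *
            ∫ θ in (-Real.pi)..Real.pi, ∑ s : Fin n, ∑ t : Fin n, F s t θ := by
          congr 1
          have hFsum : ∀ s : Fin n, IntervalIntegrable (fun θ => ∑ t : Fin n, F s t θ)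
              volume (-Real.pi) Real.pi := fun s =>
            (continuous_finset_sum _ fun t _ => hFc s t).intervalIntegrable _ _
          exact (intervalIntegral.integral_finset_sum
            (f := fun s θ => ∑ t : Fin n, F s t θ) (fun s _ => hFsum s)).symm
  rw [step2]
  have step3 : ∀ θ : ℝ, (∑ s : Fin n, ∑ t : Fin n, F s t θ) =
      ((g θ * Complex.normSq (trigPoly n x θ) : ℝ) : ℂ) := by
    intro θ
    have hconj : (starRingEnd ℂ) (trigPoly n x θ) =
        ∑ s : Fin n, (starRingEnd ℂ) (x s) * Complex.exp (-Complex.I * s * θ) := by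
      unfold trigPoly
      rw [map_sum]
      refine Finset.sum_congr rfl fun s _ => ?_
      rw [_root_.map_mul, ← Complex.exp_conj]
      congr 1
      simp only [_root_.map_mul, Complex.conj_I, Complex.conj_ofReal, Complex.conj_natCast]
      try ring
    calc (∑ s : Fin n, ∑ t : Fin n, F s t θ)
        = ((g θ : ℝ) : ℂ) *
            ((∑ s : Fin n, (starRingEnd ℂ) (x s) * Complex.exp (-Complex.I * s * θ)) *
              (∑ t : Fin n, x t * Complex.exp (Complex.I * t * θ))) := by
          rw [Finset.sum_mul_sum, Finset.mul_sum]
          refine Finset.sum_congr rfl fun s _ => ?_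
          rw [Finset.mul_sum]
          refine Finset.sum_congr rfl fun t _ => ?_
          simp only [hF]
          try ring
      _ = ((g θ : ℝ) : ℂ) * ((starRingEnd ℂ) (trigPoly n x θ) * trigPoly n x θ) := by
          rw [hconj]; rfl
      _ = ((g θ * Complex.normSq (trigPoly n x θ) : ℝ) : ℂ) := by
          rw [← Complex.normSq_eq_conj_mul_self, Complex.ofReal_mul]
  simp only [step3]
  rw [intervalIntegral.integral_ofReal]
  push_cast
  ring

/-- Rayleigh quotient bound for the minimal eigenvalue. -/
lemma iInf_eigenvalues_le_rayleigh {n : ℕ} (hn : 0 < n) (A : Matrix (Fin n) (Fin n) ℂ)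
    (hA : A.IsHermitian) (x : Fin n → ℂ) (hx : star x ⬝ᵥ x = 1) :
    (⨅ i, hA.eigenvalues i) ≤ (star x ⬝ᵥ A *ᵥ x).re := by
  classical
  haveI : Nonempty (Fin n) := Fin.pos_iff_nonempty.mp hn
  set V : Matrix (Fin n) (Fin n) ℂ := (hA.eigenvectorUnitary : Matrix (Fin n) (Fin n) ℂ) with hV
  set y : Fin n → ℂ := star V *ᵥ x with hy
  have hVV : (star V)ᴴ = V := by rw [← Matrix.star_eq_conjTranspose, star_star]
  have hstar_y : star y = star x ᵥ* V := by rw [hy, star_mulVec, hVV]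
  have h1 : star x ⬝ᵥ A *ᵥ x =
      ∑ i, (hA.eigenvalues i : ℂ) * ((starRingEnd ℂ) (y i) * y i) := by
    conv_lhs => rw [hA.spectral_theorem]
    rw [Unitary.conjStarAlgAut_apply, ← Matrix.mulVec_mulVec, ← Matrix.mulVec_mulVec, Matrix.dotProduct_mulVec, ← hstar_y]
    simp only [dotProduct, Matrix.mulVec_diagonal, Pi.star_apply, RCLike.star_def,
      Function.comp_apply, Complex.coe_algebraMap]
    refine Finset.sum_congr rfl fun i _ => ?_
    ring
  have h2 : (star x ⬝ᵥ A *ᵥ x).re = ∑ i, hA.eigenvalues i * Complex.normSq (y i) := by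
    rw [h1, Complex.re_sum]
    refine Finset.sum_congr rfl fun i _ => ?_
    rw [← Complex.normSq_eq_conj_mul_self, ← Complex.ofReal_mul, Complex.ofReal_re]
  have hyy : star y ⬝ᵥ y = star x ⬝ᵥ x := by
    rw [hstar_y, hy, Matrix.dotProduct_mulVec, Matrix.vecMul_vecMul,
      Matrix.mem_unitaryGroup_iff.mp hA.eigenvectorUnitary.2, Matrix.vecMul_one]
  have h3 : ∑ i, Complex.normSq (y i) = 1 := by
    have e1 : (star y ⬝ᵥ y).re = ∑ i, Complex.normSq (y i) := by
      simp only [dotProduct, Pi.star_apply, RCLike.star_def, Complex.re_sum]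
      exact Finset.sum_congr rfl fun i _ => by
        rw [← Complex.normSq_eq_conj_mul_self, Complex.ofReal_re]
    rw [← e1, hyy, hx, Complex.one_re]
  rw [h2]
  have hbdd : BddBelow (Set.range hA.eigenvalues) := Set.Finite.bddBelow (Set.finite_range _)
  calc (⨅ i, hA.eigenvalues i) = (⨅ i, hA.eigenvalues i) * ∑ i, Complex.normSq (y i) := by
        rw [h3, mul_one]
    _ = ∑ i, (⨅ k, hA.eigenvalues k) * Complex.normSq (y i) := Finset.mul_sum _ _ _
    _ ≤ ∑ i, hA.eigenvalues i * Complex.normSq (y i) :=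
        Finset.sum_le_sum fun i _ =>
          mul_le_mul_of_nonneg_right (ciInf_le hbdd i) (Complex.normSq_nonneg _)

/-- The key one-parameter integral estimate. -/
lemma key_integral (n : ℕ) (hn : 0 < n) (h : ℝ) (hh : h = 1 / n) {a : ℝ}
    (ha : a ∈ Set.Ioc (0:ℝ) 1) (w : ℝ → ℝ) (hw : Continuous w)
    (hw0 : ∀ θ, 0 ≤ w θ) (hwn : ∀ θ, w θ ≤ n) :
    h ^ a * ((1 / (2 * Real.pi)) * ∫ θ in (-Real.pi)..Real.pi, |θ| ^ (2 - a) * w θ) ≤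
      (1 / (2 * Real.pi)) * (∫ θ in (-Real.pi)..Real.pi, |θ| ^ (2:ℝ) * w θ) +
        h ^ 2 * (a / (3 - a)) / (3 * Real.pi) := by
  obtain ⟨ha0, ha1⟩ := ha
  have hπ : 0 < Real.pi := Real.pi_pos
  have hnR : (1:ℝ) ≤ n := by exact_mod_cast hn
  have h0 : 0 < h := by rw [hh]; positivity
  have h1 : h ≤ 1 := by rw [hh, div_le_one (by positivity)]; exact hnR
  have hhπ : h ≤ Real.pi := h1.trans (by linarith [Real.pi_gt_three])
  have h3a : 0 < 3 - a := by linarith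
  set D : ℝ → ℝ := fun θ => h ^ a * |θ| ^ (2 - a) - |θ| ^ (2:ℝ) with hD
  have cA : Continuous fun θ : ℝ => |θ| ^ (2 - a) :=
    continuous_abs.rpow_const (fun θ => Or.inr (by linarith))
  have c2 : Continuous fun θ : ℝ => |θ| ^ (2:ℝ) :=
    continuous_abs.rpow_const (fun θ => Or.inr (by norm_num))
  have cD : Continuous D := (continuous_const.mul cA).sub c2
  have cDw : Continuous fun θ => D θ * w θ := cD.mul hw
  have hDnonneg : ∀ θ ∈ Set.Icc (-h) h, 0 ≤ D θ := by
    intro θ hθ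
    have habs : |θ| ≤ h := abs_le.mpr ⟨by linarith [hθ.1], hθ.2⟩
    rcases eq_or_lt_of_le (abs_nonneg θ) with h0' | h0'
    · simp only [hD, ← h0', Real.zero_rpow (by linarith : 2 - a ≠ 0),
        Real.zero_rpow (by norm_num : (2:ℝ) ≠ 0)]
      simp
    · have e : |θ| ^ (2:ℝ) = |θ| ^ a * |θ| ^ (2 - a) := by
        rw [← Real.rpow_add h0']; norm_num
      have key : |θ| ^ a * |θ| ^ (2 - a) ≤ h ^ a * |θ| ^ (2 - a) :=
        mul_le_mul_of_nonneg_right (Real.rpow_le_rpow (abs_nonneg θ) habs ha0.le)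
          (Real.rpow_nonneg (abs_nonneg θ) _)
      simp only [hD]
      linarith [e, key]
  have hDnonpos : ∀ θ : ℝ, h ≤ |θ| → D θ ≤ 0 := by
    intro θ hθ
    have hpos : 0 < |θ| := lt_of_lt_of_le h0 hθ
    have e : |θ| ^ (2:ℝ) = |θ| ^ a * |θ| ^ (2 - a) := by
      rw [← Real.rpow_add hpos]; norm_num
    have key : h ^ a * |θ| ^ (2 - a) ≤ |θ| ^ a * |θ| ^ (2 - a) :=
      mul_le_mul_of_nonneg_right (Real.rpow_le_rpow h0.le hθ ha0.le)
        (Real.rpow_nonneg (abs_nonneg θ) _)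
    simp only [hD]
    linarith [e, key]
  have i1 : ∫ θ in (-Real.pi)..(-h), D θ * w θ ≤ 0 := by
    have hle : ∀ θ ∈ Set.Icc (-Real.pi) (-h), D θ * w θ ≤ (fun _ : ℝ => (0:ℝ)) θ := by
      intro θ hθ
      have habs : h ≤ |θ| := by
        rw [abs_of_nonpos (by linarith [hθ.2])]
        linarith [hθ.2]
      exact mul_nonpos_of_nonpos_of_nonneg (hDnonpos θ habs) (hw0 θ)
    calc ∫ θ in (-Real.pi)..(-h), D θ * w θ ≤ ∫ _ in (-Real.pi)..(-h), (0:ℝ) :=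
        intervalIntegral.integral_mono_on (by linarith) (cDw.intervalIntegrable _ _)
          (continuous_const.intervalIntegrable _ _) hle
      _ = 0 := by simp
  have i3 : ∫ θ in h..Real.pi, D θ * w θ ≤ 0 := by
    have hle : ∀ θ ∈ Set.Icc h Real.pi, D θ * w θ ≤ (fun _ : ℝ => (0:ℝ)) θ := by
      intro θ hθ
      have habs : h ≤ |θ| := by
        rw [abs_of_nonneg (by linarith [hθ.1])]
        exact hθ.1
      exact mul_nonpos_of_nonpos_of_nonneg (hDnonpos θ habs) (hw0 θ)
    calc ∫ θ in h..Real.pi, D θ * w θ ≤ ∫ _ in h..Real.pi, (0:ℝ) :=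
        intervalIntegral.integral_mono_on (by linarith) (cDw.intervalIntegrable _ _)
          (continuous_const.intervalIntegrable _ _) hle
      _ = 0 := by simp
  have i2 : ∫ θ in (-h)..h, D θ * w θ ≤ (n:ℝ) * ∫ θ in (-h)..h, D θ := by
    have step : ∫ θ in (-h)..h, D θ * w θ ≤ ∫ θ in (-h)..h, (n:ℝ) * D θ :=
      intervalIntegral.integral_mono_on (by linarith) (cDw.intervalIntegrable _ _)
        ((continuous_const.mul cD).intervalIntegrable _ _)
        (fun θ hθ => by
          have hD0 := hDnonneg θ hθ
          calc D θ * w θ ≤ D θ * n := mul_le_mul_of_nonneg_left (hwn θ) hD0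
            _ = (n:ℝ) * D θ := mul_comm _ _)
    rwa [intervalIntegral.integral_const_mul] at step
  have ev : ∀ θ : ℝ, D (-θ) = D θ := fun θ => by simp [hD, abs_neg]
  have isplit : ∫ θ in (-h)..h, D θ = (∫ θ in (-h)..(0:ℝ), D θ) + ∫ θ in (0:ℝ)..h, D θ :=
    (intervalIntegral.integral_add_adjacent_intervals (cD.intervalIntegrable _ _)
      (cD.intervalIntegrable _ _)).symm
  have ineg : ∫ θ in (-h)..(0:ℝ), D θ = ∫ θ in (0:ℝ)..h, D θ := by
    have e := intervalIntegral.integral_comp_neg (a := (0:ℝ)) (b := h) (f := D)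
    simp only [ev, neg_zero] at e
    rw [← e]
  have hpos_part : ∫ θ in (0:ℝ)..h, D θ = h ^ (3:ℝ) * a / (3 * (3 - a)) := by
    have congr1 : ∫ θ in (0:ℝ)..h, D θ =
        ∫ θ in (0:ℝ)..h, (h ^ a * θ ^ (2 - a) - θ ^ (2:ℝ)) := by
      apply intervalIntegral.integral_congr
      intro θ hθ
      rw [Set.uIcc_of_le h0.le] at hθ
      simp only [hD]
      rw [abs_of_nonneg hθ.1]
    have cB : Continuous fun θ : ℝ => θ ^ (2 - a) :=
      continuous_id.rpow_const (fun θ => Or.inr (by linarith))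
    have cB2 : Continuous fun θ : ℝ => θ ^ (2:ℝ) :=
      continuous_id.rpow_const (fun θ => Or.inr (by norm_num))
    rw [congr1, intervalIntegral.integral_sub (f := fun θ => h ^ a * θ ^ (2 - a)) (g := fun θ => θ ^ (2:ℝ))
      ((continuous_const.mul cB).intervalIntegrable _ _) (cB2.intervalIntegrable _ _),
      intervalIntegral.integral_const_mul,
      integral_rpow (Or.inl (by linarith : (-1:ℝ) < 2 - a)),
      integral_rpow (Or.inl (by norm_num : (-1:ℝ) < 2))]
    rw [show (2:ℝ) - a + 1 = 3 - a from by ring, show (2:ℝ) + 1 = 3 from by norm_num,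
      Real.zero_rpow (by linarith : (3:ℝ) - a ≠ 0), Real.zero_rpow (by norm_num : (3:ℝ) ≠ 0)]
    rw [sub_zero, sub_zero,
      show h ^ a * (h ^ (3 - a) / (3 - a)) = h ^ a * h ^ (3 - a) / (3 - a) from by ring,
      ← Real.rpow_add h0, show a + (3 - a) = 3 from by ring]
    field_simp
    ring
  have hIcompute : ∫ θ in (-h)..h, D θ = 2 * (h ^ (3:ℝ) * a / (3 * (3 - a))) := by
    rw [isplit, ineg, hpos_part]; ring
  have i2' : ∫ θ in (-h)..h, D θ * w θ ≤ (n:ℝ) * (2 * (h ^ (3:ℝ) * a / (3 * (3 - a)))) := by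
    rw [hIcompute] at i2; exact i2
  have A1 := intervalIntegral.integral_add_adjacent_intervals
    (cDw.intervalIntegrable (μ := volume) (-Real.pi) (-h))
    (cDw.intervalIntegrable (μ := volume) (-h) h)
  have A2 := intervalIntegral.integral_add_adjacent_intervals
    (cDw.intervalIntegrable (μ := volume) (-Real.pi) h)
    (cDw.intervalIntegrable (μ := volume) h Real.pi)
  have itotal : ∫ θ in (-Real.pi)..Real.pi, D θ * w θ ≤
      (n:ℝ) * (2 * (h ^ (3:ℝ) * a / (3 * (3 - a)))) := by linarith
  have hlin : ∫ θ in (-Real.pi)..Real.pi, D θ * w θ =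
      h ^ a * (∫ θ in (-Real.pi)..Real.pi, |θ| ^ (2 - a) * w θ) -
        ∫ θ in (-Real.pi)..Real.pi, |θ| ^ (2:ℝ) * w θ := by
    rw [← intervalIntegral.integral_const_mul,
      ← intervalIntegral.integral_sub (f := fun θ => h ^ a * (|θ| ^ (2 - a) * w θ)) (g := fun θ => |θ| ^ (2:ℝ) * w θ)
        ((continuous_const.mul (cA.mul hw)).intervalIntegrable _ _)
        ((c2.mul hw).intervalIntegrable _ _)]
    apply intervalIntegral.integral_congr
    intro θ _
    simp only [hD]
    ring
  have hr3 : h ^ (3:ℝ) = h * h * h := by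
    rw [show (3:ℝ) = ((3:ℕ):ℝ) from by norm_num, Real.rpow_natCast]; ring
  have hnval : (n:ℝ) = 1 / h := by
    rw [hh]; rw [one_div_one_div]
  have final_eq : (1 / (2 * Real.pi)) * ((n:ℝ) * (2 * (h ^ (3:ℝ) * a / (3 * (3 - a))))) =
      h ^ 2 * (a / (3 - a)) / (3 * Real.pi) := by
    rw [hr3, hnval]
    field_simp
  calc h ^ a * ((1 / (2 * Real.pi)) * ∫ θ in (-Real.pi)..Real.pi, |θ| ^ (2 - a) * w θ)
      = (1 / (2 * Real.pi)) *
          (h ^ a * ∫ θ in (-Real.pi)..Real.pi, |θ| ^ (2 - a) * w θ) := by ring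
    _ ≤ (1 / (2 * Real.pi)) * ((∫ θ in (-Real.pi)..Real.pi, |θ| ^ (2:ℝ) * w θ) +
          (n:ℝ) * (2 * (h ^ (3:ℝ) * a / (3 * (3 - a))))) := by
        apply mul_le_mul_of_nonneg_left _ (by positivity)
        linarith
    _ = (1 / (2 * Real.pi)) * (∫ θ in (-Real.pi)..Real.pi, |θ| ^ (2:ℝ) * w θ) +
          (1 / (2 * Real.pi)) * ((n:ℝ) * (2 * (h ^ (3:ℝ) * a / (3 * (3 - a))))) := by ring
    _ = (1 / (2 * Real.pi)) * (∫ θ in (-Real.pi)..Real.pi, |θ| ^ (2:ℝ) * w θ) +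
          h ^ 2 * (a / (3 - a)) / (3 * Real.pi) := by rw [final_eq]

theorem lambda_min_average_bound
    (q : ℕ) (hq : 1 ≤ q) (α : Fin q → ℝ) (hα : ∀ j, α j ∈ Set.Ioc (0 : ℝ) 1)
    (n : ℕ) (hn : 0 < n) (h : ℝ) (hh : h = 1 / n)
    (M : Matrix (Fin n) (Fin n) ℂ)
    (hMdef : M = ((1 : ℝ) / q) • ∑ j : Fin q,
      (h ^ (α j) : ℝ) • toeplitz n (fun θ => ((|θ| ^ (2 - α j) : ℝ) : ℂ)))
    (hM : M.IsHermitian)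
    (hT : (toeplitz n (fun θ => ((|θ| ^ (2 : ℝ) : ℝ) : ℂ))).IsHermitian) :
    ⨅ i, hM.eigenvalues i ≤ ⨅ i, hT.eigenvalues i +
      (h ^ 2 / (3 * Real.pi * q)) * ∑ j : Fin q, α j / (3 - α j) := by
  classical
  haveI : Nonempty (Fin n) := Fin.pos_iff_nonempty.mp hn
  have hqpos : (0:ℝ) < q := by exact_mod_cast hq
  have hπ : 0 < Real.pi := Real.pi_pos
  obtain ⟨i₀, hi₀⟩ := Finite.exists_min hT.eigenvalues
  have hmin : (⨅ i, hT.eigenvalues i +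
      (h ^ 2 / (3 * Real.pi * q)) * ∑ j : Fin q, α j / (3 - α j)) = hT.eigenvalues i₀ +
      (h ^ 2 / (3 * Real.pi * q)) * ∑ j : Fin q, α j / (3 - α j) :=
    le_antisymm (ciInf_le (Set.Finite.bddBelow (Set.finite_range _)) i₀)
      (le_ciInf fun j => by have := hi₀ j; linarith)
  set x : Fin n → ℂ := ⇑(hT.eigenvectorBasis i₀) with hxdef
  have hx1 : star x ⬝ᵥ x = 1 := by
    have hnorm : ‖hT.eigenvectorBasis i₀‖ = 1 := hT.eigenvectorBasis.orthonormal.1 i₀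
    have hinner := inner_self_eq_norm_sq_to_K (𝕜 := ℂ) (hT.eigenvectorBasis i₀)
    rw [EuclideanSpace.inner_eq_star_dotProduct, hnorm] at hinner
    rw [hxdef, dotProduct_comm]
    simpa using hinner
  have hray : (⨅ i, hM.eigenvalues i) ≤ (star x ⬝ᵥ M *ᵥ x).re :=
    iInf_eigenvalues_le_rayleigh hn M hM x hx1
  have c2 : Continuous fun θ : ℝ => |θ| ^ (2:ℝ) :=
    continuous_abs.rpow_const (fun θ => Or.inr (by norm_num))
  have cA : ∀ j : Fin q, Continuous fun θ : ℝ => |θ| ^ (2 - α j) := fun j =>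
    continuous_abs.rpow_const (fun θ => Or.inr (by linarith [(hα j).2]))
  set w : ℝ → ℝ := fun θ => Complex.normSq (trigPoly n x θ) with hwdef
  have hwc : Continuous w := Complex.continuous_normSq.comp (trigPoly_continuous n x)
  have hw0 : ∀ θ, 0 ≤ w θ := fun θ => Complex.normSq_nonneg _
  have hxsum : ∑ t, Complex.normSq (x t) = 1 := by
    have e1 : (star x ⬝ᵥ x).re = ∑ t, Complex.normSq (x t) := by
      simp only [dotProduct, Pi.star_apply, RCLike.star_def, Complex.re_sum]
      exact Finset.sum_congr rfl fun t _ => by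
        rw [← Complex.normSq_eq_conj_mul_self, Complex.ofReal_re]
    rw [← e1, hx1, Complex.one_re]
  have hwn : ∀ θ, w θ ≤ n := by
    intro θ
    have hexp1 : ∀ t : Fin n, ‖Complex.exp (Complex.I * t * θ)‖ = 1 := by
      intro t
      rw [show Complex.I * t * θ = ((t * θ : ℝ) : ℂ) * Complex.I from by push_cast; ring,
        Complex.norm_exp_ofReal_mul_I]
    have habs : ‖trigPoly n x θ‖ ≤ ∑ t, ‖x t‖ := by
      unfold trigPoly
      refine (norm_sum_le Finset.univ _).trans_eq ?_
      refine Finset.sum_congr rfl fun t _ => ?_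
      rw [norm_mul, hexp1 t, mul_one]
    calc w θ = ‖trigPoly n x θ‖ ^ 2 := Complex.normSq_eq_norm_sq _
      _ ≤ (∑ t, ‖x t‖) ^ 2 :=
          pow_le_pow_left₀ (norm_nonneg _) habs 2
      _ ≤ (Finset.univ.card : ℝ) * ∑ t, ‖x t‖ ^ 2 :=
          sq_sum_le_card_mul_sum_sq
      _ = (n:ℝ) * ∑ t, Complex.normSq (x t) := by
          rw [Finset.card_univ, Fintype.card_fin]
          congr 1
          exact Finset.sum_congr rfl fun t _ => Complex.sq_norm _
      _ = n := by rw [hxsum, mul_one]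
  set J2 : ℝ := ∫ θ in (-Real.pi)..Real.pi, |θ| ^ (2:ℝ) * w θ with hJ2
  set J1 : Fin q → ℝ := fun j => ∫ θ in (-Real.pi)..Real.pi, |θ| ^ (2 - α j) * w θ with hJ1
  have hquadT : star x ⬝ᵥ (toeplitz n fun θ => ((|θ| ^ (2:ℝ) : ℝ) : ℂ)) *ᵥ x =
      (((1 / (2 * Real.pi)) * J2 : ℝ) : ℂ) :=
    toeplitz_quadForm n (fun θ => |θ| ^ (2:ℝ)) c2 x
  have hquadj : ∀ j : Fin q,
      star x ⬝ᵥ (toeplitz n fun θ => ((|θ| ^ (2 - α j) : ℝ) : ℂ)) *ᵥ x =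
        (((1 / (2 * Real.pi)) * J1 j : ℝ) : ℂ) := fun j =>
    toeplitz_quadForm n (fun θ => |θ| ^ (2 - α j)) (cA j) x
  have hTeig : hT.eigenvalues i₀ = (1 / (2 * Real.pi)) * J2 := by
    rw [hT.eigenvalues_eq i₀]
    rw [← hxdef]
    rw [show (dotProduct (star x)
        ((toeplitz n fun θ => ((|θ| ^ (2:ℝ) : ℝ) : ℂ)) *ᵥ x)) =
      (((1 / (2 * Real.pi)) * J2 : ℝ) : ℂ) from hquadT]
    simp
  have hMval : (star x ⬝ᵥ M *ᵥ x).re =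
      (1 / (q:ℝ)) * ∑ j, h ^ (α j) * ((1 / (2 * Real.pi)) * J1 j) := by
    rw [hMdef, Matrix.smul_mulVec, dotProduct_smul, sum_mulVec', dotProduct_sum']
    simp only [Matrix.smul_mulVec, dotProduct_smul]
    simp only [hquadj]
    simp only [Complex.real_smul]
    rw [show ((((1:ℝ) / q : ℝ) : ℂ) *
        ∑ j : Fin q, ((h ^ (α j) : ℝ) : ℂ) * (((1 / (2 * Real.pi)) * J1 j : ℝ) : ℂ)) =
      ((((1:ℝ) / q) * ∑ j : Fin q, h ^ (α j) * ((1 / (2 * Real.pi)) * J1 j) : ℝ) : ℂ) from by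
        push_cast; ring]
    rw [Complex.ofReal_re]
  have hkey : ∀ j : Fin q, h ^ (α j) * ((1 / (2 * Real.pi)) * J1 j) ≤
      (1 / (2 * Real.pi)) * J2 + h ^ 2 * (α j / (3 - α j)) / (3 * Real.pi) := fun j =>
    key_integral n hn h hh (hα j) w hwc hw0 hwn
  have hsum_eq : ∑ j : Fin q,
      ((1 / (2 * Real.pi)) * J2 + h ^ 2 * (α j / (3 - α j)) / (3 * Real.pi)) =
      (q:ℝ) * ((1 / (2 * Real.pi)) * J2) +
        (h ^ 2 / (3 * Real.pi)) * ∑ j : Fin q, α j / (3 - α j) := by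
    rw [Finset.sum_add_distrib, Finset.sum_const, Finset.card_univ, Fintype.card_fin,
      nsmul_eq_mul]
    congr 1
    rw [Finset.mul_sum]
    exact Finset.sum_congr rfl fun j _ => by ring
  calc ⨅ i, hM.eigenvalues i ≤ (star x ⬝ᵥ M *ᵥ x).re := hray
    _ = (1 / (q:ℝ)) * ∑ j, h ^ (α j) * ((1 / (2 * Real.pi)) * J1 j) := hMval
    _ ≤ (1 / (q:ℝ)) * ∑ j : Fin q,
          ((1 / (2 * Real.pi)) * J2 + h ^ 2 * (α j / (3 - α j)) / (3 * Real.pi)) := by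
        apply mul_le_mul_of_nonneg_left (Finset.sum_le_sum fun j _ => hkey j) (by positivity)
    _ = (1 / (2 * Real.pi)) * J2 +
          (h ^ 2 / (3 * Real.pi * q)) * ∑ j : Fin q, α j / (3 - α j) := by
        rw [hsum_eq]
        field_simp
    _ = ⨅ i, hT.eigenvalues i +
          (h ^ 2 / (3 * Real.pi * q)) * ∑ j : Fin q, α j / (3 - α j) := by
        rw [hmin, hTeig]
end
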